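/- Assume (q₁*, q₂*) satisfies b₁(q₁*) = 0 and b₂(q₁*, q₂*) = 0, assume l₂*(s,a) ≥ 0 for all (s,a), and assume the dual adjoint identities: for all h : S × A → ℝ, ⟨l₂*, h − γ₂·P₂^{π₂*} h⟩_{ρ₂} = ⟨q₂*, h⟩_{ρ₂} and ⟨l₁*, h − γ₁·P₁^μ h⟩_{ρ₁} = β·⟨q₁*, h⟩_{ρ₁} + ⟨l₂*, h − Π_μ h⟩_{ρ₂}. Then (q₁*, q₂*, l₁*, l₂*) is a saddle point of L^β, i.e. L^β(q₁*, q₂*, l₁, l₂) ≤ L^β(q₁*, q₂*, l₁*, l₂*) ≤ L^β(q₁, q₂, l₁*, l₂*) for all q₁, q₂, l₁, l₂, and the quadratic growth inequality holds: for every (q₁, q₂), L^β(q₁, q₂, l₁*, l₂*) − L^β(q₁*, q₂*, l₁*, l₂*) ≥ (β/2)·‖q₁ − q₁*‖²_{ρ₁} + (1/2)·‖q₂ − q₂*‖²_{ρ₂}. -/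

import Mathlib

open BigOperators

namespace Stmt4

variable {S A : Type*} [Fintype S] [Fintype A]

/-- Soft value operator `Ω(q)(s) = τ₂ log ∑_a π_ref(a|s) exp(q(s,a)/τ₂)`. -/
noncomputable def Omega (τ₂ : ℝ) (πref : S → A → ℝ) (q : S × A → ℝ) (s : S) : ℝ :=
  τ₂ * Real.log (∑ a, πref s a * Real.exp (q (s, a) / τ₂))

/-- Anchor averaging operator `(Π_μ q)(s,a) = ∑_{a'} μ(a'|s) q(s,a')`. -/
def Pimu (μ : S → A → ℝ) (q : S × A → ℝ) (x : S × A) : ℝ :=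
  ∑ a', μ x.1 a' * q (x.1, a')

/-- Source residual `b₁(q₁) = u + γ₁ P₁^μ q₁ - q₁`. -/
def b1 (P₁ : Matrix (S × A) (S × A) ℝ) (γ₁ : ℝ) (u q₁ : S × A → ℝ) (x : S × A) : ℝ :=
  u x + γ₁ * ∑ y, P₁ x y * q₁ y - q₁ x

/-- Target residual `b₂(q₁,q₂) = (I - Π_μ)q₁ + w + γ₂ P₂ Ω(q₂) - q₂`. -/
noncomputable def b2 (P₂ : S → A → S → ℝ) (μ πref : S → A → ℝ) (τ₂ γ₂ : ℝ)
    (w q₁ q₂ : S × A → ℝ) (x : S × A) : ℝ :=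
  (q₁ x - Pimu μ q₁ x) + w x + γ₂ * ∑ s', P₂ x.1 x.2 s' * Omega τ₂ πref q₂ s' - q₂ x

/-- Weighted inner product `⟨f,g⟩_ρ = ∑_x ρ(x) f(x) g(x)`. -/
def ip (ρ f g : S × A → ℝ) : ℝ := ∑ x, ρ x * f x * g x

/-- Coupled population Lagrangian `L^β`. -/
noncomputable def Lag (P₁ : Matrix (S × A) (S × A) ℝ) (P₂ : S → A → S → ℝ)
    (μ πref : S → A → ℝ) (τ₂ γ₁ γ₂ β : ℝ) (u w ρ₁ ρ₂ : S × A → ℝ)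
    (q₁ q₂ l₁ l₂ : S × A → ℝ) : ℝ :=
  β / 2 * ip ρ₁ q₁ q₁ + 1 / 2 * ip ρ₂ q₂ q₂ +
    ip ρ₁ l₁ (b1 P₁ γ₁ u q₁) + ip ρ₂ l₂ (b2 P₂ μ πref τ₂ γ₂ w q₁ q₂)

/-- Soft-optimal policy induced by `q₂*`. -/
noncomputable def pistar (τ₂ : ℝ) (πref : S → A → ℝ) (q₂s : S × A → ℝ) (s : S) (a : A) : ℝ :=
  πref s a * Real.exp (q₂s (s, a) / τ₂) / ∑ a', πref s a' * Real.exp (q₂s (s, a') / τ₂)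

/-- Operator `P₂^{π₂*}` acting on functions of `(s,a)`. -/
noncomputable def P2pi (P₂ : S → A → S → ℝ) (τ₂ : ℝ) (πref : S → A → ℝ)
    (q₂s : S × A → ℝ) (q : S × A → ℝ) (x : S × A) : ℝ :=
  ∑ s', P₂ x.1 x.2 s' * ∑ a', pistar τ₂ πref q₂s s' a' * q (s', a')

end Stmt4

open Stmt4

section Aux

variable {S A : Type*} [Fintype S] [Fintype A]

lemma ip_congr (ρ l : S × A → ℝ) {f g : S × A → ℝ} (h : ∀ x, f x = g x) :
    ip ρ l f = ip ρ l g := by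
  unfold ip; exact Finset.sum_congr rfl fun x _ => by rw [h x]

lemma ip_sub_right (ρ l f g : S × A → ℝ) :
    ip ρ l (fun x => f x - g x) = ip ρ l f - ip ρ l g := by
  unfold ip; rw [← Finset.sum_sub_distrib]
  exact Finset.sum_congr rfl fun x _ => by ring

lemma ip_add_right (ρ l f g : S × A → ℝ) :
    ip ρ l (fun x => f x + g x) = ip ρ l f + ip ρ l g := by
  unfold ip; rw [← Finset.sum_add_distrib]
  exact Finset.sum_congr rfl fun x _ => by ring

lemma ip_const_mul_right (ρ l f : S × A → ℝ) (c : ℝ) :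
    ip ρ l (fun x => c * f x) = c * ip ρ l f := by
  unfold ip; rw [Finset.mul_sum]
  exact Finset.sum_congr rfl fun x _ => by ring

lemma ip_neg_right (ρ l f : S × A → ℝ) :
    ip ρ l (fun x => -(f x)) = -ip ρ l f := by
  unfold ip; rw [← Finset.sum_neg_distrib]
  exact Finset.sum_congr rfl fun x _ => by ring

lemma ip_self_nonneg (ρ f : S × A → ℝ) (hρ : ∀ x, 0 ≤ ρ x) : 0 ≤ ip ρ f f :=
  Finset.sum_nonneg fun x _ => by
    rw [mul_assoc]; exact mul_nonneg (hρ x) (mul_self_nonneg _)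

lemma ip_quad (ρ q qs : S × A → ℝ) :
    ip ρ (fun x => q x - qs x) (fun x => q x - qs x) =
      ip ρ q q - 2 * ip ρ qs (fun x => q x - qs x) - ip ρ qs qs := by
  unfold ip
  rw [Finset.mul_sum, ← Finset.sum_sub_distrib, ← Finset.sum_sub_distrib]
  exact Finset.sum_congr rfl fun x _ => by ring

lemma ip_nonneg_of_nonneg (ρ l f : S × A → ℝ) (hρ : ∀ x, 0 ≤ ρ x)
    (hl : ∀ x, 0 ≤ l x) (hf : ∀ x, 0 ≤ f x) : 0 ≤ ip ρ l f :=
  Finset.sum_nonneg fun x _ => mul_nonneg (mul_nonneg (hρ x) (hl x)) (hf x)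

/-- Jensen / convexity of log-sum-exp: the soft value operator dominates its
linearization at `q₂s` in the direction `q₂ - q₂s`. -/
lemma omega_grad_ineq [Nonempty A] (τ₂ : ℝ) (hτ₂ : 0 < τ₂) (πref : S → A → ℝ)
    (hπref0 : ∀ s a, 0 < πref s a) (q₂s q₂ : S × A → ℝ) (s : S) :
    ∑ a, pistar τ₂ πref q₂s s a * (q₂ (s, a) - q₂s (s, a)) ≤
      Omega τ₂ πref q₂ s - Omega τ₂ πref q₂s s := by
  set Z := ∑ a', πref s a' * Real.exp (q₂s (s, a') / τ₂) with hZdef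
  have hZ : 0 < Z :=
    Finset.sum_pos (fun a _ => mul_pos (hπref0 s a) (Real.exp_pos _)) Finset.univ_nonempty
  set w : A → ℝ := pistar τ₂ πref q₂s s with hwdef
  have hw0 : ∀ a, 0 ≤ w a := fun a =>
    div_nonneg (mul_pos (hπref0 s a) (Real.exp_pos _)).le hZ.le
  have hw1 : ∑ a, w a = 1 := by
    simp only [hwdef, pistar, ← hZdef]
    rw [← Finset.sum_div, ← hZdef, div_self hZ.ne']
  set E := ∑ a, w a * Real.exp ((q₂ (s, a) - q₂s (s, a)) / τ₂) with hEdef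
  have hE : (∑ a, πref s a * Real.exp (q₂ (s, a) / τ₂)) = Z * E := by
    rw [hEdef, Finset.mul_sum]
    refine Finset.sum_congr rfl fun a _ => ?_
    have hx : Real.exp (q₂ (s, a) / τ₂) =
        Real.exp (q₂s (s, a) / τ₂) * Real.exp ((q₂ (s, a) - q₂s (s, a)) / τ₂) := by
      rw [← Real.exp_add]; congr 1; field_simp; ring
    rw [hx, hwdef]
    simp only [pistar, ← hZdef]
    field_simp
  have hJ : Real.exp (∑ a, w a • ((q₂ (s, a) - q₂s (s, a)) / τ₂)) ≤ E :=
    convexOn_exp.map_sum_le (fun a _ => hw0 a) hw1 (fun a _ => Set.mem_univ _)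
  have hEpos : 0 < E := lt_of_lt_of_le (Real.exp_pos _) hJ
  have hlog : ∑ a, w a * ((q₂ (s, a) - q₂s (s, a)) / τ₂) ≤ Real.log E := by
    have h := Real.log_le_log (Real.exp_pos _) hJ
    rw [Real.log_exp] at h
    simpa [smul_eq_mul] using h
  have hOmega : Omega τ₂ πref q₂ s - Omega τ₂ πref q₂s s = τ₂ * Real.log E := by
    unfold Omega
    rw [← hZdef, hE, Real.log_mul hZ.ne' hEpos.ne']
    ring
  rw [hOmega]
  calc ∑ a, w a * (q₂ (s, a) - q₂s (s, a))
      = τ₂ * ∑ a, w a * ((q₂ (s, a) - q₂s (s, a)) / τ₂) := by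
        rw [Finset.mul_sum]
        exact Finset.sum_congr rfl fun a _ => by field_simp
    _ ≤ τ₂ * Real.log E := mul_le_mul_of_nonneg_left hlog hτ₂.le

end Aux

/-- Theorem (Population saddle point and quadratic growth): given the dual
adjoint identities, `(q₁*, q₂*, l₁*, l₂*)` is a saddle point of `L^β` and the
quadratic-growth inequality holds. -/
theorem stmt_4 {S A : Type*} [Fintype S] [Fintype A] [Nonempty S] [Nonempty A]
    (P₂ : S → A → S → ℝ) (hP₂0 : ∀ s a s', 0 ≤ P₂ s a s') (hP₂1 : ∀ s a, ∑ s', P₂ s a s' = 1)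
    (P₁ : Matrix (S × A) (S × A) ℝ) (hP₁0 : ∀ x y, 0 ≤ P₁ x y) (hP₁1 : ∀ x, ∑ y, P₁ x y = 1)
    (μ : S → A → ℝ) (hμ0 : ∀ s a, 0 ≤ μ s a) (hμ1 : ∀ s, ∑ a, μ s a = 1)
    (τ₂ : ℝ) (hτ₂ : 0 < τ₂)
    (πref : S → A → ℝ) (hπref0 : ∀ s a, 0 < πref s a) (hπref1 : ∀ s, ∑ a, πref s a = 1)
    (γ₁ γ₂ β : ℝ) (hγ₁0 : 0 ≤ γ₁) (hγ₁1 : γ₁ < 1) (hγ₂0 : 0 ≤ γ₂) (hγ₂1 : γ₂ < 1)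
    (hβ : 0 ≤ β)
    (u w ρ₁ ρ₂ : S × A → ℝ)
    (hρ₁0 : ∀ x, 0 ≤ ρ₁ x) (hρ₁1 : ∑ x, ρ₁ x = 1)
    (hρ₂0 : ∀ x, 0 ≤ ρ₂ x) (hρ₂1 : ∑ x, ρ₂ x = 1)
    (q₁s q₂s l₁s l₂s : S × A → ℝ)
    (hb1 : ∀ x, b1 P₁ γ₁ u q₁s x = 0)
    (hb2 : ∀ x, b2 P₂ μ πref τ₂ γ₂ w q₁s q₂s x = 0)
    (hl₂pos : ∀ x, 0 ≤ l₂s x)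
    (hadj2 : ∀ h : S × A → ℝ,
      ip ρ₂ l₂s (fun x => h x - γ₂ * P2pi P₂ τ₂ πref q₂s h x) = ip ρ₂ q₂s h)
    (hadj1 : ∀ h : S × A → ℝ,
      ip ρ₁ l₁s (fun x => h x - γ₁ * ∑ y, P₁ x y * h y) =
        β * ip ρ₁ q₁s h + ip ρ₂ l₂s (fun x => h x - Pimu μ h x)) :
    (∀ l₁ l₂ : S × A → ℝ,
        Lag P₁ P₂ μ πref τ₂ γ₁ γ₂ β u w ρ₁ ρ₂ q₁s q₂s l₁ l₂ ≤
          Lag P₁ P₂ μ πref τ₂ γ₁ γ₂ β u w ρ₁ ρ₂ q₁s q₂s l₁s l₂s) ∧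
    (∀ q₁ q₂ : S × A → ℝ,
        Lag P₁ P₂ μ πref τ₂ γ₁ γ₂ β u w ρ₁ ρ₂ q₁s q₂s l₁s l₂s ≤
          Lag P₁ P₂ μ πref τ₂ γ₁ γ₂ β u w ρ₁ ρ₂ q₁ q₂ l₁s l₂s) ∧
    (∀ q₁ q₂ : S × A → ℝ,
        β / 2 * ip ρ₁ (fun x => q₁ x - q₁s x) (fun x => q₁ x - q₁s x) +
            1 / 2 * ip ρ₂ (fun x => q₂ x - q₂s x) (fun x => q₂ x - q₂s x) ≤
          Lag P₁ P₂ μ πref τ₂ γ₁ γ₂ β u w ρ₁ ρ₂ q₁ q₂ l₁s l₂s -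
            Lag P₁ P₂ μ πref τ₂ γ₁ γ₂ β u w ρ₁ ρ₂ q₁s q₂s l₁s l₂s) := by
  -- Value of the Lagrangian at the saddle point is independent of the duals.
  have hLstar : ∀ l₁ l₂ : S × A → ℝ,
      Lag P₁ P₂ μ πref τ₂ γ₁ γ₂ β u w ρ₁ ρ₂ q₁s q₂s l₁ l₂ =
        β / 2 * ip ρ₁ q₁s q₁s + 1 / 2 * ip ρ₂ q₂s q₂s := by
    intro l₁ l₂
    have e1 : ip ρ₁ l₁ (b1 P₁ γ₁ u q₁s) = 0 := by
      unfold ip; exact Finset.sum_eq_zero fun x _ => by rw [hb1 x, mul_zero]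
    have e2 : ip ρ₂ l₂ (b2 P₂ μ πref τ₂ γ₂ w q₁s q₂s) = 0 := by
      unfold ip; exact Finset.sum_eq_zero fun x _ => by rw [hb2 x, mul_zero]
    unfold Lag; rw [e1, e2]; ring
  -- Key expansion of the primal gap.
  have hkey : ∀ q₁ q₂ : S × A → ℝ,
      Lag P₁ P₂ μ πref τ₂ γ₁ γ₂ β u w ρ₁ ρ₂ q₁ q₂ l₁s l₂s -
          Lag P₁ P₂ μ πref τ₂ γ₁ γ₂ β u w ρ₁ ρ₂ q₁s q₂s l₁s l₂s =
        β / 2 * ip ρ₁ (fun x => q₁ x - q₁s x) (fun x => q₁ x - q₁s x) +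
          1 / 2 * ip ρ₂ (fun x => q₂ x - q₂s x) (fun x => q₂ x - q₂s x) +
          γ₂ * ip ρ₂ l₂s (fun x =>
            (∑ s', P₂ x.1 x.2 s' *
              (Omega τ₂ πref q₂ s' - Omega τ₂ πref q₂s s')) -
            P2pi P₂ τ₂ πref q₂s (fun y => q₂ y - q₂s y) x) := by
    intro q₁ q₂
    set δ₁ : S × A → ℝ := fun x => q₁ x - q₁s x with hδ₁
    set δ₂ : S × A → ℝ := fun x => q₂ x - q₂s x with hδ₂
    set g : S × A → ℝ := fun x =>
      (∑ s', P₂ x.1 x.2 s' * (Omega τ₂ πref q₂ s' - Omega τ₂ πref q₂s s')) -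
        P2pi P₂ τ₂ πref q₂s δ₂ x with hg
    -- pointwise form of b₁ at q₁
    have hb1d : ∀ x, b1 P₁ γ₁ u q₁ x = -(δ₁ x - γ₁ * ∑ y, P₁ x y * δ₁ y) := by
      intro x
      have h0 := hb1 x
      have hsub : ∑ y, P₁ x y * δ₁ y =
          (∑ y, P₁ x y * q₁ y) - ∑ y, P₁ x y * q₁s y := by
        simp only [hδ₁, mul_sub, Finset.sum_sub_distrib]
      simp only [b1] at h0 ⊢
      simp only [hδ₁] at hsub ⊢
      rw [hsub]; linarith [h0]
    -- pointwise form of b₂ at (q₁, q₂)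
    have hb2d : ∀ x, b2 P₂ μ πref τ₂ γ₂ w q₁ q₂ x =
        (δ₁ x - Pimu μ δ₁ x) +
          γ₂ * (∑ s', P₂ x.1 x.2 s' * (Omega τ₂ πref q₂ s' - Omega τ₂ πref q₂s s')) -
          δ₂ x := by
      intro x
      have h0 := hb2 x
      have hPim : Pimu μ δ₁ x = Pimu μ q₁ x - Pimu μ q₁s x := by
        simp only [hδ₁, Pimu, mul_sub, Finset.sum_sub_distrib]
      have hOm : ∑ s', P₂ x.1 x.2 s' * (Omega τ₂ πref q₂ s' - Omega τ₂ πref q₂s s') =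
          (∑ s', P₂ x.1 x.2 s' * Omega τ₂ πref q₂ s') -
            ∑ s', P₂ x.1 x.2 s' * Omega τ₂ πref q₂s s' := by
        simp only [mul_sub, Finset.sum_sub_distrib]
      simp only [b2] at h0 ⊢
      simp only [hδ₁, hδ₂]
      simp only [hδ₁] at hPim
      linear_combination h0 - γ₂ * hOm + hPim
    -- dual term 1
    have h1 : ip ρ₁ l₁s (b1 P₁ γ₁ u q₁) =
        -(β * ip ρ₁ q₁s δ₁ + ip ρ₂ l₂s (fun x => δ₁ x - Pimu μ δ₁ x)) := by
      rw [← hadj1 δ₁, ← ip_neg_right]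
      exact ip_congr _ _ fun x => by rw [hb1d x]
    -- dual term 2
    have h2 : ip ρ₂ l₂s (b2 P₂ μ πref τ₂ γ₂ w q₁ q₂) =
        ip ρ₂ l₂s (fun x => δ₁ x - Pimu μ δ₁ x) + γ₂ * ip ρ₂ l₂s g -
          ip ρ₂ q₂s δ₂ := by
      have hsplit : ip ρ₂ l₂s (b2 P₂ μ πref τ₂ γ₂ w q₁ q₂) =
          ip ρ₂ l₂s (fun x => ((δ₁ x - Pimu μ δ₁ x) + γ₂ * g x) -
            (δ₂ x - γ₂ * P2pi P₂ τ₂ πref q₂s δ₂ x)) := by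
        refine ip_congr _ _ fun x => ?_
        rw [hb2d x]; simp only [hg]; ring
      rw [hsplit, ip_sub_right, hadj2 δ₂, ip_add_right, ip_const_mul_right]
    -- quadratic identities
    have hq1 := ip_quad ρ₁ q₁ q₁s
    have hq2 := ip_quad ρ₂ q₂ q₂s
    rw [hLstar l₁s l₂s]
    unfold Lag
    rw [h1, h2]
    simp only [← hδ₁, ← hδ₂] at hq1 hq2 ⊢
    linear_combination (-(β / 2)) * hq1 - (1 / 2) * hq2
  -- the remainder term is nonnegative
  have hrem : ∀ q₂ : S × A → ℝ, 0 ≤ γ₂ * ip ρ₂ l₂s (fun x =>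
      (∑ s', P₂ x.1 x.2 s' * (Omega τ₂ πref q₂ s' - Omega τ₂ πref q₂s s')) -
        P2pi P₂ τ₂ πref q₂s (fun y => q₂ y - q₂s y) x) := by
    intro q₂
    refine mul_nonneg hγ₂0 (ip_nonneg_of_nonneg _ _ _ hρ₂0 hl₂pos fun x => ?_)
    have : P2pi P₂ τ₂ πref q₂s (fun y => q₂ y - q₂s y) x =
        ∑ s', P₂ x.1 x.2 s' *
          ∑ a', pistar τ₂ πref q₂s s' a' * (q₂ (s', a') - q₂s (s', a')) := rfl
    rw [this, ← Finset.sum_sub_distrib]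
    refine Finset.sum_nonneg fun s' _ => ?_
    rw [← mul_sub]
    exact mul_nonneg (hP₂0 x.1 x.2 s')
      (sub_nonneg.2 (omega_grad_ineq τ₂ hτ₂ πref hπref0 q₂s q₂ s'))
  refine ⟨fun l₁ l₂ => le_of_eq (by rw [hLstar l₁ l₂, hLstar l₁s l₂s]), ?_, ?_⟩
  · intro q₁ q₂
    have h := hkey q₁ q₂
    have hq1 := ip_self_nonneg ρ₁ (fun x => q₁ x - q₁s x) hρ₁0
    have hq2 := ip_self_nonneg ρ₂ (fun x => q₂ x - q₂s x) hρ₂0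
    have hr := hrem q₂
    nlinarith [hq1, hq2, hr, h]
  · intro q₁ q₂
    have h := hkey q₁ q₂
    have hr := hrem q₂
    linarith [h, hr]
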